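/- Let κ > 0, t₀ ≤ t real numbers. Let E : [t₀, t] → ℝ be nonnegative, differentiable with E > 0, and let g, h : [t₀, t] → ℝ be continuous and nonnegative. If (1/2)·E'(s) ≤ −κ·E(s) + (κ²·g(s) + e^{−κs}·h(s))·√(E(s)) for all s ∈ [t₀, t], then √(E(t)) ≤ e^{−κ(t−t₀)}·√(E(t₀)) + κ·(1 − e^{−κ(t−t₀)})·sup_{τ∈[t₀,t]} g(τ) + e^{−κt}·(t−t₀)·sup_{τ∈[t₀,t]} h(τ). -/

import Mathlib

open Real Set

/-- **Combined energy estimate (inequality (eq:Gronwall:5) in abstract form).**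
If `E` is nonnegative, positive and differentiable on `[t₀, t]`, `g, h` are continuous and
nonnegative there, and `(1/2)·E'(s) ≤ −κ·E(s) + (κ²·g(s) + e^{−κs}·h(s))·√(E(s))` on
`[t₀, t]`, then
`√(E(t)) ≤ e^{−κ(t−t₀)}·√(E(t₀)) + κ·(1 − e^{−κ(t−t₀)})·sup_{[t₀,t]} g
  + e^{−κt}·(t−t₀)·sup_{[t₀,t]} h`. -/
theorem combined_energy_estimate
    (κ t₀ t : ℝ) (hκ : 0 < κ) (ht : t₀ ≤ t)
    (E E' g h : ℝ → ℝ)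
    (hE_pos : ∀ s ∈ Icc t₀ t, 0 < E s)
    (hE_deriv : ∀ s ∈ Icc t₀ t, HasDerivAt E (E' s) s)
    (hg_cont : ContinuousOn g (Icc t₀ t))
    (hg_nonneg : ∀ s ∈ Icc t₀ t, 0 ≤ g s)
    (hh_cont : ContinuousOn h (Icc t₀ t))
    (hh_nonneg : ∀ s ∈ Icc t₀ t, 0 ≤ h s)
    (hineq : ∀ s ∈ Icc t₀ t,
      (1/2) * E' s ≤ -κ * E s + (κ ^ 2 * g s + Real.exp (-κ * s) * h s) * Real.sqrt (E s)) :
    Real.sqrt (E t) ≤ Real.exp (-κ * (t - t₀)) * Real.sqrt (E t₀)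
      + κ * (1 - Real.exp (-κ * (t - t₀))) * sSup (g '' Icc t₀ t)
      + Real.exp (-κ * t) * (t - t₀) * sSup (h '' Icc t₀ t) := by
  set G := sSup (g '' Icc t₀ t) with hG
  set H := sSup (h '' Icc t₀ t) with hH
  have ht₀mem : t₀ ∈ Icc t₀ t := ⟨le_refl _, ht⟩
  have htmem : t ∈ Icc t₀ t := ⟨ht, le_refl _⟩
  have hgG : ∀ s ∈ Icc t₀ t, g s ≤ G := fun s hs =>
    le_csSup (isCompact_Icc.bddAbove_image hg_cont) ⟨s, hs, rfl⟩
  have hhH : ∀ s ∈ Icc t₀ t, h s ≤ H := fun s hs =>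
    le_csSup (isCompact_Icc.bddAbove_image hh_cont) ⟨s, hs, rfl⟩
  -- auxiliary function
  set ψ : ℝ → ℝ := fun s => Real.exp (κ * s) * Real.sqrt (E s)
      - κ * G * Real.exp (κ * s) - H * s with hψdef
  set ψ' : ℝ → ℝ := fun s => κ * Real.exp (κ * s) * Real.sqrt (E s)
      + Real.exp (κ * s) * (E' s / (2 * Real.sqrt (E s)))
      - κ * G * (κ * Real.exp (κ * s)) - H with hψ'def
  have hψderiv : ∀ s ∈ Icc t₀ t, HasDerivAt ψ (ψ' s) s := by
    intro s hs
    have hexp : HasDerivAt (fun s : ℝ => Real.exp (κ * s)) (Real.exp (κ * s) * κ) s := by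
      simpa using ((hasDerivAt_id s).const_mul κ).exp
    have hsq : HasDerivAt (fun s => Real.sqrt (E s)) (E' s / (2 * Real.sqrt (E s))) s :=
      (hE_deriv s hs).sqrt (hE_pos s hs).ne'
    have := ((hexp.mul hsq).sub (hexp.const_mul (κ * G))).sub ((hasDerivAt_id s).const_mul H)
    refine HasDerivAt.congr_deriv this ?_
    simp only [hψ'def]; ring
  have hψcont : ContinuousOn ψ (Icc t₀ t) := by
    intro s hs
    exact ((hψderiv s hs).continuousAt).continuousWithinAt
  have hψ'nonpos : ∀ s ∈ Icc t₀ t, ψ' s ≤ 0 := by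
    intro s hs
    have hEp := hE_pos s hs
    have hsqp : 0 < Real.sqrt (E s) := Real.sqrt_pos.2 hEp
    have hsq : Real.sqrt (E s) * Real.sqrt (E s) = E s := Real.mul_self_sqrt hEp.le
    have hi := hineq s hs
    have hep : 0 < Real.exp (κ * s) := Real.exp_pos _
    have hee : Real.exp (κ * s) * Real.exp (-κ * s) = 1 := by
      rw [← Real.exp_add]; ring_nf; exact Real.exp_zero
    have hg' := hgG s hs
    have hh' := hhH s hs
    have hdd : E' s / (2 * Real.sqrt (E s)) * Real.sqrt (E s) = (1/2) * E' s := by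
      field_simp
    have key : ψ' s * Real.sqrt (E s) ≤ 0 := by
      have heq : ψ' s * Real.sqrt (E s) =
          κ * Real.exp (κ * s) * E s + Real.exp (κ * s) * ((1/2) * E' s)
          - (κ * G * (κ * Real.exp (κ * s)) + H) * Real.sqrt (E s) := by
        simp only [hψ'def]
        linear_combination Real.exp (κ * s) * hdd + κ * Real.exp (κ * s) * hsq
      rw [heq]
      have h1 : Real.exp (κ * s) * ((1/2) * E' s) ≤
          Real.exp (κ * s) * (-κ * E s + (κ ^ 2 * g s + Real.exp (-κ * s) * h s)
            * Real.sqrt (E s)) := mul_le_mul_of_nonneg_left hi hep.le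
      have h2 : Real.exp (κ * s) * (Real.exp (-κ * s) * h s * Real.sqrt (E s))
          = h s * Real.sqrt (E s) := by
        linear_combination (h s * Real.sqrt (E s)) * hee
      nlinarith [h1, h2,
        mul_le_mul_of_nonneg_right hg'
          (by positivity : (0:ℝ) ≤ κ ^ 2 * Real.exp (κ * s) * Real.sqrt (E s)),
        mul_le_mul_of_nonneg_right hh' hsqp.le]
    nlinarith [key, hsqp]
  have hanti : AntitoneOn ψ (Icc t₀ t) := by
    apply antitoneOn_of_deriv_nonpos (convex_Icc t₀ t) hψcont
    · intro s hs
      rw [interior_Icc] at hs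
      exact ((hψderiv s (Ioo_subset_Icc_self hs)).differentiableAt).differentiableWithinAt
    · intro s hs
      rw [interior_Icc] at hs
      rw [(hψderiv s (Ioo_subset_Icc_self hs)).deriv]
      exact hψ'nonpos s (Ioo_subset_Icc_self hs)
  have hψle : ψ t ≤ ψ t₀ := hanti ht₀mem htmem ht
  have key : Real.exp (κ * t) * Real.sqrt (E t) ≤ Real.exp (κ * t₀) * Real.sqrt (E t₀)
      + κ * G * (Real.exp (κ * t) - Real.exp (κ * t₀)) + H * (t - t₀) := by
    simp only [hψdef] at hψle; linarith
  have ha : (0:ℝ) < Real.exp (κ * t) := Real.exp_pos _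
  rw [show -κ * (t - t₀) = κ * t₀ - κ * t by ring, Real.exp_sub,
    show -κ * t = -(κ * t) by ring, Real.exp_neg]
  rw [← mul_le_mul_iff_right₀ ha]
  field_simp
  linarith [key]
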